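/- arXiv:1305.0610 — 2 statements merged into one kernel-verified Lean document; each statement's English description precedes it below -/
import Mathlib

section
/- Let $f \in L^2(E,\mu)$ with eigenfunction expansion coefficients $a_j^k = \langle f, \phi_j^{(k)}\rangle$ and let $\gamma(f)$ be the smallest $k$ with some $a_j^k \ne 0$. Then for any $t_1 > 0$ there is a constant $C$ such that for all $t > t_1$ and $x \in E$: $e^{\lambda_{\gamma(f)} t} |T_t f(x)| \le C\, a_{t_1}(x)^{1/2}$, where $a_t(x) = q_t(x,x)$. -/
open MeasureTheory

/-- Uniform bound on the renormalized semigroup: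
`e^{λ_{γ(f)} t} |T_t f(x)| ≤ C a_{t₁}(x)^{1/2}` for `t > t₁`. -/
theorem stmt_9 {E : Type*} [MeasurableSpace E] (μ : Measure E) [SigmaFinite μ]
    (lam : ℕ → ℝ) (hlam : StrictMono lam)
    (n : ℕ → ℕ) (φ : (k : ℕ) → Fin (n k) → E → ℝ)
    (hφmeas : ∀ k j, Measurable (φ k j))
    (horth : ∀ (k k' : ℕ) (j : Fin (n k)) (j' : Fin (n k')),
      ∫ x, φ k j x * φ k' j' x ∂μ = if k = k' ∧ (j : ℕ) = (j' : ℕ) then 1 else 0)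
    (q : ℝ → E → E → ℝ)
    (hq : ∀ t x y, 0 < t →
      HasSum (fun k => Real.exp (-lam k * t) * ∑ j, φ k j x * φ k j y) (q t x y))
    (a : ℝ → E → ℝ) (ha : ∀ t x, a t x = q t x x)
    (hInt : ∀ t, 0 < t → Integrable (a t) μ)
    (T : ℝ → (E → ℝ) → E → ℝ)
    (hT : ∀ t (g : E → ℝ) x, 0 < t → T t g x = ∫ y, q t x y * g y ∂μ)
    (f : E → ℝ) (hf : MemLp f 2 μ)
    -- γ is the smallest index with a nonzero coefficient
    (γ : ℕ)
    (hγlow : ∀ k < γ, ∀ j : Fin (n k), ∫ y, f y * φ k j y ∂μ = 0)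
    (hγne : ∃ j : Fin (n γ), ∫ y, f y * φ γ j y ∂μ ≠ 0) :
    ∀ t₁ > (0 : ℝ), ∃ C : ℝ, ∀ t, t₁ < t → ∀ x,
      Real.exp (lam γ * t) * |T t f x| ≤ C * Real.sqrt (a t₁ x) := by
  intro t₁ ht₁
  have hfm := hf.aestronglyMeasurable
  have hfsq : Integrable (fun x => f x ^ 2) μ := hf.integrable_sq
  set M : ℝ := (1 + ∫ x, f x ^ 2 ∂μ) / 2 with hMdef
  have hIf : 0 ≤ ∫ x, f x ^ 2 ∂μ := integral_nonneg fun x => sq_nonneg _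
  have hM0 : 0 ≤ M := by positivity
  -- each φ² is integrable
  have hφsq : ∀ k (j : Fin (n k)), Integrable (fun x => φ k j x ^ 2) μ := by
    intro k j
    by_contra h
    have h1 := horth k k j j
    simp only [and_self, if_true] at h1
    rw [integral_undef (by simpa only [pow_two] using h)] at h1
    exact one_ne_zero h1.symm
  have hφ2int : ∀ k (j : Fin (n k)), ∫ x, φ k j x ^ 2 ∂μ = 1 := by
    intro k j
    have h1 := horth k k j j
    simp only [and_self, if_true] at h1
    simpa only [pow_two] using h1
  -- φ · f is integrable with |∫| bounded by M
  have hφf : ∀ k (j : Fin (n k)), Integrable (fun y => φ k j y * f y) μ := by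
    intro k j
    refine Integrable.mono' (((hφsq k j).add hfsq).div_const 2)
      ((hφmeas k j).aestronglyMeasurable.mul hfm) (ae_of_all _ fun y => ?_)
    simp only [Pi.add_apply]
    rw [Real.norm_eq_abs, abs_mul]
    nlinarith [sq_nonneg (|φ k j y| - |f y|), sq_abs (φ k j y), sq_abs (f y),
      abs_nonneg (φ k j y), abs_nonneg (f y)]
  have habs : ∀ k (j : Fin (n k)), ∫ y, |φ k j y * f y| ∂μ ≤ M := by
    intro k j
    have h1 : ∀ y, |φ k j y * f y| ≤ (φ k j y ^ 2 + f y ^ 2) / 2 := by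
      intro y
      rw [abs_mul]
      nlinarith [sq_nonneg (|φ k j y| - |f y|), sq_abs (φ k j y), sq_abs (f y),
        abs_nonneg (φ k j y), abs_nonneg (f y)]
    calc ∫ y, |φ k j y * f y| ∂μ ≤ ∫ y, (φ k j y ^ 2 + f y ^ 2) / 2 ∂μ :=
          integral_mono (hφf k j).abs (((hφsq k j).add hfsq).div_const 2) h1
      _ = M := by
          rw [integral_div, integral_add (hφsq k j) hfsq, hφ2int k j]
  -- eigen-expansion of a in squared form
  have hq' : ∀ t x, 0 < t →
      HasSum (fun k => Real.exp (-lam k * t) * ∑ j, φ k j x ^ 2) (a t x) := by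
    intro t x ht
    rw [ha]
    simpa only [pow_two] using hq t x x ht
  have hterm0 : ∀ (t : ℝ) k x, 0 ≤ Real.exp (-lam k * t) * ∑ j, φ k j x ^ 2 :=
    fun t k x => mul_nonneg (Real.exp_pos _).le (Finset.sum_nonneg fun j _ => sq_nonneg _)
  have ha0 : ∀ t x, 0 < t → 0 ≤ a t x := by
    intro t x ht
    simpa using sum_le_hasSum (∅ : Finset ℕ) (fun k _ => hterm0 t k x) (hq' t x ht)
  have hterm_le : ∀ (t : ℝ), 0 < t → ∀ k x,
      Real.exp (-lam k * t) * ∑ j, φ k j x ^ 2 ≤ a t x := by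
    intro t ht k x
    exact le_hasSum (hq' t x ht) k (fun b _ => hterm0 t b x)
  -- summability of ∑ₖ e^{-λₖ s} nₖ
  have hsum : ∀ s : ℝ, 0 < s → Summable (fun k => Real.exp (-lam k * s) * (n k : ℝ)) := by
    intro s hs
    have hint : ∀ k, Integrable (fun x => Real.exp (-lam k * s) * ∑ j, φ k j x ^ 2) μ :=
      fun k => (integrable_finset_sum _ fun j _ => hφsq k j).const_mul _
    apply summable_of_sum_range_le (c := ∫ x, a s x ∂μ)
      (fun k => mul_nonneg (Real.exp_pos _).le (Nat.cast_nonneg _))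
    intro N
    have h1 : ∑ k ∈ Finset.range N, Real.exp (-lam k * s) * (n k : ℝ)
        = ∫ x, ∑ k ∈ Finset.range N, Real.exp (-lam k * s) * ∑ j, φ k j x ^ 2 ∂μ := by
      rw [integral_finset_sum _ (fun k _ => hint k)]
      refine Finset.sum_congr rfl fun k _ => ?_
      rw [integral_const_mul, integral_finset_sum _ (fun j _ => hφsq k j)]
      simp [hφ2int]
    rw [h1]
    refine integral_mono (integrable_finset_sum _ fun k _ => hint k) (hInt s hs) fun x => ?_
    exact sum_le_hasSum (Finset.range N) (fun k _ => hterm0 s k x) (hq' s x hs)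
  -- Cauchy–Schwarz bound on ∑ⱼ |φⱼᵏ(x)|
  have hsqrtn : ∀ m : ℕ, Real.sqrt m ≤ m := by
    intro m
    rcases Nat.eq_zero_or_pos m with h | h
    · simp [h]
    · have h1 : (1 : ℝ) ≤ m := by exact_mod_cast h
      calc Real.sqrt m ≤ Real.sqrt ((m : ℝ) * m) := Real.sqrt_le_sqrt (by nlinarith)
        _ = m := Real.sqrt_mul_self (by positivity)
  have hCSbound : ∀ k x, ∑ j, |φ k j x| ≤
      (n k : ℝ) * (Real.exp (lam k * (t₁ / 2)) * Real.sqrt (a t₁ x)) := by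
    intro k x
    have hCS : ∑ j, |φ k j x| ≤ Real.sqrt (n k) * Real.sqrt (∑ j, φ k j x ^ 2) := by
      have h := Real.sum_mul_le_sqrt_mul_sqrt (Finset.univ : Finset (Fin (n k)))
        (fun _ => (1 : ℝ)) (fun j => |φ k j x|)
      simpa [sq_abs] using h
    have h2 : ∑ j, φ k j x ^ 2 ≤ Real.exp (lam k * t₁) * a t₁ x := by
      have h := mul_le_mul_of_nonneg_left (hterm_le t₁ ht₁ k x) (Real.exp_pos (lam k * t₁)).le
      rwa [← mul_assoc, ← Real.exp_add, show lam k * t₁ + -lam k * t₁ = (0:ℝ) by ring, Real.exp_zero, one_mul] at h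
    have h3 : Real.sqrt (∑ j, φ k j x ^ 2) ≤
        Real.exp (lam k * (t₁ / 2)) * Real.sqrt (a t₁ x) := by
      calc Real.sqrt (∑ j, φ k j x ^ 2) ≤ Real.sqrt (Real.exp (lam k * t₁) * a t₁ x) :=
            Real.sqrt_le_sqrt h2
        _ = Real.exp (lam k * (t₁ / 2)) * Real.sqrt (a t₁ x) := by
            rw [Real.sqrt_mul (Real.exp_pos _).le]
            congr 1
            rw [show lam k * (t₁ / 2) = lam k * t₁ / 2 by ring, Real.exp_half]
    calc ∑ j, |φ k j x| ≤ Real.sqrt (n k) * Real.sqrt (∑ j, φ k j x ^ 2) := hCS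
      _ ≤ (n k : ℝ) * (Real.exp (lam k * (t₁ / 2)) * Real.sqrt (a t₁ x)) :=
          mul_le_mul (hsqrtn (n k)) h3 (Real.sqrt_nonneg _) (Nat.cast_nonneg _)
  -- the constant
  set S : ℝ := ∑' k, (n k : ℝ) * Real.exp (-lam k * (t₁ / 2)) with hSdef
  refine ⟨M * Real.exp (lam γ * t₁) * S, ?_⟩
  intro t ht x
  have ht0 : 0 < t := ht₁.trans ht
  set F : ℕ → E → ℝ :=
    fun k y => (Real.exp (-lam k * t) * ∑ j, φ k j x * φ k j y) * f y with hFdef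
  have hFeq : ∀ k, F k = fun y => ∑ j, (Real.exp (-lam k * t) * φ k j x) * (φ k j y * f y) := by
    intro k
    funext y
    simp only [hFdef, Finset.mul_sum, Finset.sum_mul]
    exact Finset.sum_congr rfl fun j _ => by ring
  have hF_int : ∀ k, Integrable (F k) μ := by
    intro k
    rw [hFeq k]
    exact integrable_finset_sum _ fun j _ => (hφf k j).const_mul _
  set B : ℕ → ℝ := fun k => (M * Real.sqrt (a t₁ x)) *
    ((n k : ℝ) * Real.exp (lam k * (t₁ / 2) - lam k * t)) with hBdef
  have hFle : ∀ k, ∫ y, ‖F k y‖ ∂μ ≤ B k := by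
    intro k
    have hpt : ∀ y, ‖F k y‖ ≤
        ∑ j, (Real.exp (-lam k * t) * |φ k j x|) * |φ k j y * f y| := by
      intro y
      rw [Real.norm_eq_abs, hFeq k]
      calc |∑ j, (Real.exp (-lam k * t) * φ k j x) * (φ k j y * f y)|
          ≤ ∑ j, |(Real.exp (-lam k * t) * φ k j x) * (φ k j y * f y)| :=
            Finset.abs_sum_le_sum_abs _ _
        _ = ∑ j, (Real.exp (-lam k * t) * |φ k j x|) * |φ k j y * f y| := by
            refine Finset.sum_congr rfl fun j _ => ?_
            rw [abs_mul, abs_mul, abs_of_pos (Real.exp_pos _)]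
    have hint2 : Integrable
        (fun y => ∑ j, (Real.exp (-lam k * t) * |φ k j x|) * |φ k j y * f y|) μ :=
      integrable_finset_sum _ fun j _ => ((hφf k j).abs.const_mul _)
    calc ∫ y, ‖F k y‖ ∂μ
        ≤ ∫ y, ∑ j, (Real.exp (-lam k * t) * |φ k j x|) * |φ k j y * f y| ∂μ :=
          integral_mono (hF_int k).norm hint2 hpt
      _ = ∑ j, (Real.exp (-lam k * t) * |φ k j x|) * ∫ y, |φ k j y * f y| ∂μ := by
          rw [integral_finset_sum _ (fun j _ => ((hφf k j).abs.const_mul _))]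
          exact Finset.sum_congr rfl fun j _ => integral_const_mul _ _
      _ ≤ ∑ j, (Real.exp (-lam k * t) * |φ k j x|) * M := by
          refine Finset.sum_le_sum fun j _ => ?_
          exact mul_le_mul_of_nonneg_left (habs k j)
            (mul_nonneg (Real.exp_pos _).le (abs_nonneg _))
      _ = Real.exp (-lam k * t) * (∑ j, |φ k j x|) * M := by
          rw [Finset.mul_sum, Finset.sum_mul]
      _ ≤ Real.exp (-lam k * t) *
            ((n k : ℝ) * (Real.exp (lam k * (t₁ / 2)) * Real.sqrt (a t₁ x))) * M := by
          refine mul_le_mul_of_nonneg_right ?_ hM0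
          exact mul_le_mul_of_nonneg_left (hCSbound k x) (Real.exp_pos _).le
      _ = B k := by
          simp only [hBdef]
          rw [show lam k * (t₁ / 2) - lam k * t = -lam k * t + lam k * (t₁ / 2) by ring,
            Real.exp_add]
          ring
    -- summability of B
  have hBsum : Summable B := by
    have h2 := hsum (t - t₁ / 2) (by linarith)
    have h1 : B = fun k => (M * Real.sqrt (a t₁ x)) *
        (Real.exp (-lam k * (t - t₁ / 2)) * (n k : ℝ)) := by
      funext k
      simp only [hBdef]
      rw [show lam k * (t₁ / 2) - lam k * t = -lam k * (t - t₁ / 2) by ring]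
      ring
    rw [h1]
    exact h2.mul_left _
  have hF_sum : Summable fun k => ∫ y, ‖F k y‖ ∂μ :=
    Summable.of_nonneg_of_le (fun k => integral_nonneg fun y => norm_nonneg _) hFle hBsum
  -- Fubini
  have hTt : T t f x = ∫ y, ∑' k, F k y ∂μ := by
    rw [hT t f x ht0]
    refine integral_congr_ae (ae_of_all _ fun y => ?_)
    exact (((hq t x y ht0).mul_right (f y)).tsum_eq).symm
  have hs : HasSum (fun k => ∫ y, F k y ∂μ) (T t f x) := by
    rw [hTt]
    exact hasSum_integral_of_summable_integral_norm hF_int hF_sum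
  -- value of each integral
  have hIk : ∀ k, ∫ y, F k y ∂μ =
      ∑ j, (Real.exp (-lam k * t) * φ k j x) * ∫ y, φ k j y * f y ∂μ := by
    intro k
    rw [hFeq k, integral_finset_sum _ (fun j _ => (hφf k j).const_mul _)]
    exact Finset.sum_congr rfl fun j _ => integral_const_mul _ _
  -- the term bound E
  set Eb : ℕ → ℝ := fun k => (M * Real.exp (lam γ * t₁) * Real.sqrt (a t₁ x)) *
    ((n k : ℝ) * Real.exp (-lam k * (t₁ / 2))) with hEdef
  have hEsum : Summable Eb := by
    have h2 : Summable fun k => (n k : ℝ) * Real.exp (-lam k * (t₁ / 2)) := by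
      have h := hsum (t₁ / 2) (by linarith)
      exact h.congr fun k => mul_comm _ _
    exact h2.mul_left _
  have hE : ∀ k, ‖Real.exp (lam γ * t) * ∫ y, F k y ∂μ‖ ≤ Eb k := by
    intro k
    have hEnn : 0 ≤ Eb k := by
      have := ha0 t₁ x ht₁
      have := Real.sqrt_nonneg (a t₁ x)
      simp only [hEdef]
      exact mul_nonneg (mul_nonneg (mul_nonneg hM0 (Real.exp_pos _).le) (Real.sqrt_nonneg _))
        (mul_nonneg (Nat.cast_nonneg _) (Real.exp_pos _).le)
    rcases lt_or_ge k γ with hk | hk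
    · have hz : ∫ y, F k y ∂μ = 0 := by
        rw [hIk k]
        refine Finset.sum_eq_zero fun j _ => ?_
        have h0 : ∫ y, φ k j y * f y ∂μ = 0 := by
          rw [← hγlow k hk j]
          exact integral_congr_ae (ae_of_all _ fun y => mul_comm _ _)
        rw [h0, mul_zero]
      rw [hz, mul_zero, norm_zero]
      exact hEnn
    · have h1 : ‖∫ y, F k y ∂μ‖ ≤ B k := (norm_integral_le_integral_norm _).trans (hFle k)
      calc ‖Real.exp (lam γ * t) * ∫ y, F k y ∂μ‖
          = Real.exp (lam γ * t) * ‖∫ y, F k y ∂μ‖ := by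
            rw [norm_mul, Real.norm_eq_abs, abs_of_pos (Real.exp_pos _)]
        _ ≤ Real.exp (lam γ * t) * B k :=
            mul_le_mul_of_nonneg_left h1 (Real.exp_pos _).le
        _ = (M * Real.sqrt (a t₁ x) * (n k : ℝ)) *
              Real.exp (lam γ * t + (lam k * (t₁ / 2) - lam k * t)) := by
            simp only [hBdef]
            rw [Real.exp_add]; ring
        _ ≤ (M * Real.sqrt (a t₁ x) * (n k : ℝ)) *
              Real.exp (lam γ * t₁ + -(lam k * (t₁ / 2))) := by
            refine mul_le_mul_of_nonneg_left (Real.exp_le_exp.2 ?_) ?_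
            · have hlg : lam γ ≤ lam k := hlam.monotone hk
              nlinarith [mul_nonneg (sub_nonneg.2 hlg) (sub_nonneg.2 ht.le)]
            · exact mul_nonneg (mul_nonneg hM0 (Real.sqrt_nonneg _)) (Nat.cast_nonneg _)
        _ = Eb k := by
            simp only [hEdef]
            rw [Real.exp_add, show -(lam k * (t₁ / 2)) = -lam k * (t₁ / 2) by ring]
            ring
  -- combine
  have hmain : ‖Real.exp (lam γ * t) * T t f x‖ ≤ ∑' k, Eb k := by
    rw [← (hs.mul_left (Real.exp (lam γ * t))).tsum_eq]
    exact tsum_of_norm_bounded hEsum.hasSum hE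
  have htsumE : ∑' k, Eb k = (M * Real.exp (lam γ * t₁) * Real.sqrt (a t₁ x)) * S := by
    simp only [hEdef]
    rw [tsum_mul_left, hSdef]
  calc Real.exp (lam γ * t) * |T t f x| = ‖Real.exp (lam γ * t) * T t f x‖ := by
        rw [norm_mul, Real.norm_eq_abs, Real.norm_eq_abs, abs_of_pos (Real.exp_pos _)]
    _ ≤ ∑' k, Eb k := hmain
    _ = M * Real.exp (lam γ * t₁) * S * Real.sqrt (a t₁ x) := by rw [htsumE]; ring
end

section
/- In the same eigenfunction setting, for every $f \in L^2(E,\mu)$ with $\gamma(f) < \infty$ and every $x \in E$: $\lim_{t\to\infty} e^{\lambda_{\gamma(f)} t} T_t f(x) = \sum_{j=1}^{n_{\gamma(f)}} a_j^{\gamma(f)} \phi_j^{(\gamma(f))}(x)$, where $a_j^k = \langle f, \phi_j^{(k)}\rangle$. -/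
open MeasureTheory

/-- Pointwise limit: `e^{λ_{γ(f)} t} T_t f(x) → ∑ⱼ aⱼ^{γ(f)} φⱼ^{(γ(f))}(x)`. -/
theorem stmt_10 {E : Type*} [MeasurableSpace E] (μ : Measure E) [SigmaFinite μ]
    (lam : ℕ → ℝ) (hlam : StrictMono lam)
    (n : ℕ → ℕ) (φ : (k : ℕ) → Fin (n k) → E → ℝ)
    (hφmeas : ∀ k j, Measurable (φ k j))
    (horth : ∀ (k k' : ℕ) (j : Fin (n k)) (j' : Fin (n k')),
      ∫ x, φ k j x * φ k' j' x ∂μ = if k = k' ∧ (j : ℕ) = (j' : ℕ) then 1 else 0)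
    (q : ℝ → E → E → ℝ)
    (hq : ∀ t x y, 0 < t →
      HasSum (fun k => Real.exp (-lam k * t) * ∑ j, φ k j x * φ k j y) (q t x y))
    (a : ℝ → E → ℝ) (ha : ∀ t x, a t x = q t x x)
    (hInt : ∀ t, 0 < t → Integrable (a t) μ)
    (T : ℝ → (E → ℝ) → E → ℝ)
    (hT : ∀ t (g : E → ℝ) x, 0 < t → T t g x = ∫ y, q t x y * g y ∂μ)
    (f : E → ℝ) (hf : MemLp f 2 μ)
    -- γ(f) < ∞ : the smallest index with a nonzero coefficient
    (γ : ℕ)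
    (hγlow : ∀ k < γ, ∀ j : Fin (n k), ∫ y, f y * φ k j y ∂μ = 0)
    (hγne : ∃ j : Fin (n γ), ∫ y, f y * φ γ j y ∂μ ≠ 0) :
    ∀ x : E,
      Filter.Tendsto (fun t => Real.exp (lam γ * t) * T t f x) Filter.atTop
        (nhds (∑ j : Fin (n γ), (∫ y, f y * φ γ j y ∂μ) * φ γ j x)) := by
  intro x
  classical
  -- coefficients and partial eigen-sums
  set c : (k : ℕ) → Fin (n k) → ℝ := fun k j => ∫ y, f y * φ k j y ∂μ with hc
  set S : ℕ → ℝ := fun k => ∑ j, c k j * φ k j x with hSdef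
  set A : ℕ → E → ℝ := fun k y => ∑ j, φ k j y * φ k j y with hAdef
  have hAnn : ∀ k y, 0 ≤ A k y := fun k y =>
    Finset.sum_nonneg fun j _ => mul_self_nonneg _
  -- each φ² is integrable
  have hsq : ∀ k j, Integrable (fun y => φ k j y * φ k j y) μ := by
    intro k j
    by_contra h
    have h1 := horth k k j j
    rw [integral_undef h] at h1
    simp at h1
  have hφL2 : ∀ k j, MemLp (φ k j) 2 μ := by
    intro k j
    refine (memLp_two_iff_integrable_sq (hφmeas k j).aestronglyMeasurable).2 ?_
    simpa [pow_two] using hsq k j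
  -- product with f is integrable
  have hprod : ∀ k j, Integrable (fun y => φ k j y * f y) μ := by
    intro k j
    have hpqr : (1 : ENNReal) / 1 = 1 / 2 + 1 / 2 := by
      simp [one_div, ENNReal.inv_two_add_inv_two]
    haveI : ENNReal.HolderTriple 2 2 1 := ⟨by rw [ENNReal.inv_two_add_inv_two, inv_one]⟩
    have := memLp_one_iff_integrable.mp (MemLp.smul (r := 1) hf (hφL2 k j))
    exact this
  -- the L² norm constant of f
  set Rf : ℝ := (∫ y, ‖f y‖ ^ (2:ℝ) ∂μ) ^ (1/(2:ℝ)) with hRf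
  have hRf0 : 0 ≤ Rf := Real.rpow_nonneg
    (integral_nonneg fun y => Real.rpow_nonneg (norm_nonneg _) _) _
  -- Cauchy–Schwarz: ∫|φ·f| ≤ Rf
  have hCS : ∀ k j, ∫ y, |φ k j y * f y| ∂μ ≤ Rf := by
    intro k j
    have h2 : (2:ℝ).HolderConjugate 2 := Real.HolderConjugate.two_two
    have hφ2 : MemLp (φ k j) (ENNReal.ofReal 2) μ := by
      simpa [ENNReal.ofReal_ofNat] using hφL2 k j
    have hf2 : MemLp f (ENNReal.ofReal 2) μ := by
      simpa [ENNReal.ofReal_ofNat] using hf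
    have := integral_mul_norm_le_Lp_mul_Lq h2 hφ2 hf2
    have hφint : ∫ y, ‖φ k j y‖ ^ (2:ℝ) ∂μ = 1 := by
      have : (fun y => ‖φ k j y‖ ^ (2:ℝ)) = fun y => φ k j y * φ k j y := by
        funext y
        rw [show (2:ℝ) = ((2:ℕ):ℝ) by norm_num, Real.rpow_natCast,
          Real.norm_eq_abs, sq_abs, sq]
      rw [this]
      simpa using horth k k j j
    calc ∫ y, |φ k j y * f y| ∂μ = ∫ y, ‖φ k j y‖ * ‖f y‖ ∂μ := by
          simp [abs_mul, Real.norm_eq_abs]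
      _ ≤ (∫ y, ‖φ k j y‖ ^ (2:ℝ) ∂μ) ^ (1/(2:ℝ)) * (∫ y, ‖f y‖ ^ (2:ℝ) ∂μ) ^ (1/(2:ℝ)) := this
      _ = Rf := by rw [hφint, Real.one_rpow, one_mul]
  -- |c k j| ≤ Rf
  have hcbound : ∀ k j, |c k j| ≤ Rf := by
    intro k j
    calc |c k j| = |∫ y, f y * φ k j y ∂μ| := rfl
      _ ≤ ∫ y, |f y| * |φ k j y| ∂μ := by
          simpa [Real.norm_eq_abs, abs_mul] using
            norm_integral_le_integral_norm (μ := μ) (fun y => f y * φ k j y)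
      _ = ∫ y, |φ k j y * f y| ∂μ := by simp [abs_mul, mul_comm]
      _ ≤ Rf := hCS k j
  -- HasSum of eigen-expansion of a t y
  have hAx : ∀ t, 0 < t → ∀ y, HasSum (fun k => Real.exp (-lam k * t) * A k y) (a t y) := by
    intro t ht y
    rw [ha]
    exact hq t y y ht
  have hAint : ∀ k, Integrable (A k) μ :=
    fun k => integrable_finset_sum _ fun j _ => hsq k j
  have hAval : ∀ k, ∫ y, A k y ∂μ = (n k : ℝ) := by
    intro k
    rw [hAdef]
    rw [integral_finset_sum _ fun j _ => hsq k j]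
    have : ∀ j : Fin (n k), ∫ y, φ k j y * φ k j y ∂μ = 1 := by
      intro j; simpa using horth k k j j
    simp [this]
  -- summability of exp(-λ_k t) * n_k
  have hN : ∀ t, 0 < t → Summable (fun k => Real.exp (-lam k * t) * (n k : ℝ)) := by
    intro t ht
    refine summable_of_sum_range_le (c := ∫ y, a t y ∂μ)
      (fun k => mul_nonneg (Real.exp_pos _).le (Nat.cast_nonneg _)) (fun m => ?_)
    have h1 : ∑ k ∈ Finset.range m, Real.exp (-lam k * t) * (n k : ℝ)
        = ∫ y, ∑ k ∈ Finset.range m, Real.exp (-lam k * t) * A k y ∂μ := by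
      rw [integral_finset_sum _ fun k _ => (hAint k).const_mul _]
      refine Finset.sum_congr rfl fun k _ => ?_
      rw [integral_const_mul, hAval k]
    rw [h1]
    refine integral_mono (integrable_finset_sum _ fun k _ => (hAint k).const_mul _)
      (hInt t ht) (fun y => ?_)
    exact sum_le_hasSum _ (fun k _ => mul_nonneg (Real.exp_pos _).le (hAnn k y)) (hAx t ht y)
  -- summability of exp(-λ_k t) * A k x
  have hAxs : ∀ t, 0 < t → Summable (fun k => Real.exp (-lam k * t) * A k x) :=
    fun t ht => (hAx t ht x).summable
  -- √u·√v summable trick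
  have hsqrt : ∀ (u v : ℕ → ℝ), (∀ k, 0 ≤ u k) → (∀ k, 0 ≤ v k) → Summable u → Summable v →
      Summable (fun k => Real.sqrt (u k) * Real.sqrt (v k)) := by
    intro u v hu hv su sv
    refine Summable.of_nonneg_of_le (fun k => by positivity) (fun k => ?_)
      ((su.add sv).div_const 2)
    have h1 := Real.sq_sqrt (hu k)
    have h2 := Real.sq_sqrt (hv k)
    nlinarith [sq_nonneg (Real.sqrt (u k) - Real.sqrt (v k))]
  -- finite Cauchy–Schwarz: ∑ |φ k j x| ≤ √n_k √(A k x)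
  have habs : ∀ k, ∑ j, |φ k j x| ≤ Real.sqrt (n k) * Real.sqrt (A k x) := by
    intro k
    have h1 : (∑ j, |φ k j x|) ^ 2 ≤ (n k : ℝ) * A k x := by
      have := sq_sum_le_card_mul_sum_sq (s := (Finset.univ : Finset (Fin (n k))))
        (f := fun j => |φ k j x|)
      simpa [sq_abs, sq, hAdef] using this
    have h2 : ∑ j, |φ k j x| = Real.sqrt ((∑ j, |φ k j x|) ^ 2) :=
      (Real.sqrt_sq (Finset.sum_nonneg fun j _ => abs_nonneg _)).symm
    rw [h2, ← Real.sqrt_mul (Nat.cast_nonneg _)]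
    exact Real.sqrt_le_sqrt h1
  -- exp splitting: exp(-λ t) = √(exp(-λ t)) * √(exp(-λ t))
  have hexp_split : ∀ (r : ℝ), Real.exp r = Real.sqrt (Real.exp r) * Real.sqrt (Real.exp r) :=
    fun r => (Real.mul_self_sqrt (Real.exp_pos r).le).symm
  -- the key bound sequence is summable
  have hkey : ∀ t, 0 < t →
      Summable (fun k => Real.exp (-lam k * t) * (Real.sqrt (n k) * Real.sqrt (A k x))) := by
    intro t ht
    have : ∀ k, Real.exp (-lam k * t) * (Real.sqrt (n k) * Real.sqrt (A k x))
        = Real.sqrt (Real.exp (-lam k * t) * (n k : ℝ))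
          * Real.sqrt (Real.exp (-lam k * t) * A k x) := by
      intro k
      rw [Real.sqrt_mul (Real.exp_pos _).le, Real.sqrt_mul (Real.exp_pos _).le]
      have h := Real.mul_self_sqrt (Real.exp_pos (-lam k * t)).le
      linear_combination (-(Real.sqrt (n k : ℝ) * Real.sqrt (A k x))) * h
    rw [show (fun k => Real.exp (-lam k * t) * (Real.sqrt (n k) * Real.sqrt (A k x)))
      = fun k => Real.sqrt (Real.exp (-lam k * t) * (n k : ℝ))
          * Real.sqrt (Real.exp (-lam k * t) * A k x) from funext this]
    exact hsqrt _ _ (fun k => mul_nonneg (Real.exp_pos _).le (Nat.cast_nonneg _))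
      (fun k => mul_nonneg (Real.exp_pos _).le (hAnn k x)) (hN t ht) (hAxs t ht)
  -- main expansion: HasSum (fun k => exp(-λ_k t) S k) (T t f x)
  have hTsum : ∀ t, 0 < t → HasSum (fun k => Real.exp (-lam k * t) * S k) (T t f x) := by
    intro t ht
    set F : ℕ → E → ℝ :=
      fun k y => Real.exp (-lam k * t) * (∑ j, φ k j x * φ k j y) * f y with hF
    have hFrw : ∀ k, F k
        = fun y => ∑ j, (Real.exp (-lam k * t) * φ k j x) * (φ k j y * f y) := by
      intro k; funext y
      simp only [hF, Finset.mul_sum, Finset.sum_mul]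
      exact Finset.sum_congr rfl fun j _ => by ring
    have hFint : ∀ k, Integrable (F k) μ := by
      intro k
      rw [hFrw k]
      exact integrable_finset_sum _ fun j _ => (hprod k j).const_mul _
    have hFnorm : ∀ k, ∫ y, ‖F k y‖ ∂μ
        ≤ Real.exp (-lam k * t) * (Real.sqrt (n k) * Real.sqrt (A k x)) * Rf := by
      intro k
      have hRHSint : Integrable
          (fun y => ∑ j, (Real.exp (-lam k * t) * |φ k j x|) * |φ k j y * f y|) μ :=
        integrable_finset_sum _ fun j _ => ((hprod k j).abs.const_mul _)
      have hle : ∀ y, ‖F k y‖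
          ≤ ∑ j, (Real.exp (-lam k * t) * |φ k j x|) * |φ k j y * f y| := by
        intro y
        simp only [hF, Real.norm_eq_abs]
        calc |Real.exp (-lam k * t) * (∑ j, φ k j x * φ k j y) * f y|
            = Real.exp (-lam k * t) * |∑ j, φ k j x * φ k j y| * |f y| := by
              rw [abs_mul, abs_mul, abs_of_pos (Real.exp_pos _)]
          _ ≤ Real.exp (-lam k * t) * (∑ j, |φ k j x * φ k j y|) * |f y| := by
              have h1 := Finset.abs_sum_le_sum_abs
                (fun j : Fin (n k) => φ k j x * φ k j y) Finset.univ
              have h2 : (0:ℝ) ≤ |f y| := abs_nonneg _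
              have h3 := (Real.exp_pos (-lam k * t)).le
              exact mul_le_mul_of_nonneg_right
                (mul_le_mul_of_nonneg_left h1 h3) h2
          _ = ∑ j, (Real.exp (-lam k * t) * |φ k j x|) * |φ k j y * f y| := by
              rw [Finset.mul_sum, Finset.sum_mul]
              exact Finset.sum_congr rfl fun j _ => by
                rw [abs_mul, abs_mul]; ring
      calc ∫ y, ‖F k y‖ ∂μ
          ≤ ∫ y, ∑ j, (Real.exp (-lam k * t) * |φ k j x|) * |φ k j y * f y| ∂μ :=
            integral_mono (hFint k).norm hRHSint hle
        _ = ∑ j, (Real.exp (-lam k * t) * |φ k j x|) * ∫ y, |φ k j y * f y| ∂μ := by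
            rw [integral_finset_sum _ fun j _ => ((hprod k j).abs.const_mul _)]
            exact Finset.sum_congr rfl fun j _ => integral_const_mul _ _
        _ ≤ ∑ j, (Real.exp (-lam k * t) * |φ k j x|) * Rf :=
            Finset.sum_le_sum fun j _ =>
              mul_le_mul_of_nonneg_left (hCS k j) (by positivity)
        _ = Real.exp (-lam k * t) * (∑ j, |φ k j x|) * Rf := by
            rw [Finset.mul_sum, Finset.sum_mul]
        _ ≤ Real.exp (-lam k * t) * (Real.sqrt (n k) * Real.sqrt (A k x)) * Rf :=
            mul_le_mul_of_nonneg_right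
              (mul_le_mul_of_nonneg_left (habs k) (Real.exp_pos _).le) hRf0
    have hSummable : Summable fun k => ∫ y, ‖F k y‖ ∂μ := by
      refine Summable.of_nonneg_of_le
        (fun k => integral_nonneg fun y => norm_nonneg _) hFnorm ?_
      exact (hkey t ht).mul_right Rf
    have hHS := hasSum_integral_of_summable_integral_norm hFint hSummable
    have hIF : ∀ k, ∫ y, F k y ∂μ = Real.exp (-lam k * t) * S k := by
      intro k
      rw [hFrw k, integral_finset_sum _ fun j _ => (hprod k j).const_mul _]
      have hterm : ∀ j : Fin (n k),
          ∫ y, (Real.exp (-lam k * t) * φ k j x) * (φ k j y * f y) ∂μ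
          = (Real.exp (-lam k * t) * φ k j x) * c k j := by
        intro j
        rw [integral_const_mul]
        congr 1
        exact integral_congr_ae (Filter.Eventually.of_forall fun y => mul_comm _ _)
      simp_rw [hterm]
      rw [hSdef]
      simp only [Finset.mul_sum]
      exact Finset.sum_congr rfl fun j _ => by ring
    have htsum : (∫ y, ∑' k, F k y ∂μ) = ∫ y, q t x y * f y ∂μ :=
      integral_congr_ae (Filter.Eventually.of_forall fun y =>
        ((hq t x y ht).mul_right (f y)).tsum_eq)
    have h2 : (fun k => ∫ y, F k y ∂μ) = fun k => Real.exp (-lam k * t) * S k :=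
      funext hIF
    rw [h2, htsum] at hHS
    rw [hT t f x ht]
    exact hHS
  -- bound on |S k|
  have hSbound : ∀ k, |S k| ≤ Rf * (Real.sqrt (n k) * Real.sqrt (A k x)) := by
    intro k
    calc |S k| ≤ ∑ j, |c k j * φ k j x| := Finset.abs_sum_le_sum_abs _ _
      _ ≤ ∑ j, Rf * |φ k j x| := by
          refine Finset.sum_le_sum fun j _ => ?_
          rw [abs_mul]
          exact mul_le_mul_of_nonneg_right (hcbound k j) (abs_nonneg _)
      _ = Rf * ∑ j, |φ k j x| := by rw [Finset.mul_sum]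
      _ ≤ Rf * (Real.sqrt (n k) * Real.sqrt (A k x)) :=
          mul_le_mul_of_nonneg_left (habs k) hRf0
  -- spectral gap
  have hδ : 0 < lam (γ+1) - lam γ := sub_pos.mpr (hlam (Nat.lt_succ_self γ))
  set δ : ℝ := lam (γ+1) - lam γ with hδdef
  -- weight sequence
  set w : ℕ → ℝ := fun k => Real.exp (lam γ - lam k) * |S k| with hw
  have hw0 : ∀ k, 0 ≤ w k := fun k => mul_nonneg (Real.exp_pos _).le (abs_nonneg _)
  have hwle : ∀ k, w k ≤ (Real.exp (lam γ) * Rf)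
      * (Real.exp (-lam k * 1) * (Real.sqrt (n k) * Real.sqrt (A k x))) := by
    intro k
    have hsplit : Real.exp (lam γ - lam k) = Real.exp (lam γ) * Real.exp (-lam k * 1) := by
      rw [← Real.exp_add]; ring_nf
    have h1 := hSbound k
    calc w k = Real.exp (lam γ) * Real.exp (-lam k * 1) * |S k| := by
          simp only [hw]; rw [← hsplit]
      _ ≤ Real.exp (lam γ) * Real.exp (-lam k * 1)
          * (Rf * (Real.sqrt (n k) * Real.sqrt (A k x))) := by
          exact mul_le_mul_of_nonneg_left h1 (by positivity)
      _ = (Real.exp (lam γ) * Rf)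
          * (Real.exp (-lam k * 1) * (Real.sqrt (n k) * Real.sqrt (A k x))) := by ring
  have hwsum : Summable w :=
    Summable.of_nonneg_of_le hw0 hwle (((hkey 1 one_pos).mul_left _))
  set W : ℝ := ∑' k, w k with hWdef
  -- vanishing of low modes
  have hSlow : ∀ k, k < γ → S k = 0 := by
    intro k hk
    exact Finset.sum_eq_zero fun j _ => by
      rw [show c k j = (0:ℝ) from hγlow k hk j, zero_mul]
  -- difference has sum
  have hdiff : ∀ t, 0 < t →
      HasSum (fun k => Real.exp ((lam γ - lam k) * t) * S k - (if k = γ then S γ else 0))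
        (Real.exp (lam γ * t) * T t f x - S γ) := by
    intro t ht
    have h := (hTsum t ht).mul_left (Real.exp (lam γ * t))
    have heq : (fun k => Real.exp (lam γ * t) * (Real.exp (-lam k * t) * S k))
        = fun k => Real.exp ((lam γ - lam k) * t) * S k := by
      funext k
      rw [← mul_assoc, ← Real.exp_add]
      congr 2
      ring
    rw [heq] at h
    exact h.sub (hasSum_ite_eq γ (S γ))
  -- uniform tail bound for t ≥ 1
  have hbound : ∀ t, 1 ≤ t →
      |Real.exp (lam γ * t) * T t f x - S γ| ≤ Real.exp (-δ*(t-1)) * W := by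
    intro t ht1
    have ht : (0:ℝ) < t := lt_of_lt_of_le one_pos ht1
    set g : ℕ → ℝ :=
      fun k => Real.exp ((lam γ - lam k) * t) * S k - (if k = γ then S γ else 0) with hg
    have hgb : ∀ k, |g k| ≤ Real.exp (-δ*(t-1)) * w k := by
      intro k
      rcases lt_trichotomy k γ with hk | hk | hk
      · have hzero : g k = 0 := by
          simp only [hg]
          rw [hSlow k hk, mul_zero, if_neg hk.ne, sub_zero]
        rw [hzero, abs_zero]
        exact mul_nonneg (Real.exp_pos _).le (hw0 k)
      · have hzero : g k = 0 := by
          subst hk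
          simp [hg, sub_self]
        rw [hzero, abs_zero]
        exact mul_nonneg (Real.exp_pos _).le (hw0 k)
      · have hgk : g k = Real.exp ((lam γ - lam k) * t) * S k := by
          simp only [hg]
          rw [if_neg hk.ne', sub_zero]
        have hlek : δ ≤ lam k - lam γ := by
          have h2 := hlam.monotone (Nat.succ_le_of_lt hk)
          rw [hδdef]; linarith
        have hexp : Real.exp ((lam γ - lam k) * t)
            ≤ Real.exp (-δ*(t-1)) * Real.exp (lam γ - lam k) := by
          rw [← Real.exp_add]
          apply Real.exp_le_exp.mpr
          nlinarith [mul_nonneg (sub_nonneg.mpr hlek) (sub_nonneg.mpr ht1)]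
        calc |g k| = Real.exp ((lam γ - lam k) * t) * |S k| := by
              rw [hgk, abs_mul, abs_of_pos (Real.exp_pos _)]
          _ ≤ (Real.exp (-δ*(t-1)) * Real.exp (lam γ - lam k)) * |S k| :=
              mul_le_mul_of_nonneg_right hexp (abs_nonneg _)
          _ = Real.exp (-δ*(t-1)) * w k := by simp only [hw]; ring
    have hgsummable : Summable fun k => |g k| :=
      Summable.of_nonneg_of_le (fun k => abs_nonneg _) hgb (hwsum.mul_left _)
    have hgsummable' : Summable fun k => ‖g k‖ := by
      simpa [Real.norm_eq_abs] using hgsummable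
    calc |Real.exp (lam γ * t) * T t f x - S γ| = |∑' k, g k| := by
          rw [(hdiff t ht).tsum_eq]
      _ ≤ ∑' k, |g k| := by
          simpa [Real.norm_eq_abs] using norm_tsum_le_tsum_norm hgsummable'
      _ ≤ ∑' k, Real.exp (-δ*(t-1)) * w k :=
          Summable.tsum_le_tsum hgb hgsummable (hwsum.mul_left _)
      _ = Real.exp (-δ*(t-1)) * W := tsum_mul_left
  -- conclude by squeezing
  have hzero : Filter.Tendsto (fun t => Real.exp (lam γ * t) * T t f x - S γ)
      Filter.atTop (nhds 0) := by
    apply squeeze_zero_norm' (a := fun t => Real.exp (-δ*(t-1)) * W)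
    · filter_upwards [Filter.eventually_ge_atTop (1:ℝ)] with t ht
      simpa [Real.norm_eq_abs] using hbound t ht
    · have h2 : Filter.Tendsto (fun t:ℝ => t - 1) Filter.atTop Filter.atTop :=
        Filter.tendsto_atTop_add_const_right _ _ Filter.tendsto_id
      have h3 : Filter.Tendsto (fun t:ℝ => δ * (t - 1)) Filter.atTop Filter.atTop :=
        h2.const_mul_atTop hδ
      have h4 : Filter.Tendsto (fun t:ℝ => -δ * (t - 1)) Filter.atTop Filter.atBot := by
        have := Filter.tendsto_neg_atTop_atBot.comp h3
        simpa [Function.comp_def, neg_mul] using this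
      have h5 : Filter.Tendsto (fun t:ℝ => Real.exp (-δ * (t - 1)))
          Filter.atTop (nhds 0) := Real.tendsto_exp_atBot.comp h4
      simpa using h5.mul_const W
  have hfinal := hzero.add_const (S γ)
  have hrw : (fun t => (Real.exp (lam γ * t) * T t f x - S γ) + S γ)
      = fun t => Real.exp (lam γ * t) * T t f x := by
    funext t; ring
  rw [hrw, zero_add] at hfinal
  exact hfinal
end
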